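/- For any link L, the ascending number satisfies a(L) ≤ ⌊c(L)/2⌋, where c(L) is the minimal crossing number of L and ⌊x⌋ denotes the greatest integer not exceeding x. -/

import Mathlib

noncomputable section

open Set Metric Real

/-- Euclidean 3-space, the ambient space for links. -/
abbrev R3 : Type := EuclideanSpace ℝ (Fin 3)

/-- The Euclidean plane, where link diagrams live. -/
abbrev R2 : Type := EuclideanSpace ℝ (Fin 2)

/-- Convenient constructor for points of `R3`. -/
def v3 (a b c : ℝ) : R3 := WithLp.toLp 2 ![a, b, c]

/-- Convenient constructor for points of `R2`. -/
def v2 (a b : ℝ) : R2 := WithLp.toLp 2 ![a, b]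

/-- The projection of `ℝ³` onto the plane of the diagram. -/
def pr (x : R3) : R2 := v2 (x 0) (x 1)

/-- The height function on `ℝ³` (the coordinate forgotten by `pr`). -/
def ht (x : R3) : ℝ := x 2

/-- The parametrizing circle `ℝ/ℤ`. -/
abbrev S1 : Type := AddCircle (1 : ℝ)

instance : Fact ((0 : ℝ) < 1) := ⟨one_pos⟩

/-- The time in `[0,1)` at which the point of parameter `t` is visited when
traversing a component from its basepoint (parameter `0`) in the direction
of its orientation. -/
def tOf (t : S1) : ℝ := (AddCircle.equivIco 1 0 t).1

/-- A link with `n` ordered components: a (tame, i.e. polygonal up to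
parametrization) topological embedding of `n` disjoint circles into `ℝ³`.
The component carrying a point `(i, t)` is `i` (this gives the ordering), the
orientation of each component is the one induced by the parametrization, and
the basepoint of each component is the point of parameter `0`.  (Working in
the piecewise linear category, every component is required to have polygonal
image.) -/
structure Link (n : ℕ) where
  emb : Fin n × S1 → R3
  continuous : Continuous emb
  injective : Function.Injective emb
  polygonal : ∀ i : Fin n, ∃ F : Finset (R3 × R3),
    (Set.range fun t : S1 => emb (i, t)) = ⋃ s ∈ F, segment ℝ s.1 s.2

/-- `Carries L A` : some ambient isotopy of `ℝ³` carries (the image of) `L`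
onto the set `A`. -/
def Carries {n : ℕ} (L : Link n) (A : Set R3) : Prop :=
  ∃ H : ℝ → (R3 ≃ₜ R3),
    Continuous (fun p : ℝ × R3 => H p.1 p.2) ∧
    H 0 = Homeomorph.refl R3 ∧
    (H 1) '' (Set.range L.emb) = A

/-- Two links are equivalent if an ambient isotopy carries one onto the other. -/
def LinkEquiv {n : ℕ} (L₁ L₂ : Link n) : Prop := Carries L₁ (Set.range L₂.emb)

/-- The set of double points (crossing points) of the projection of a link. -/
def doublePts {n : ℕ} (L : Link n) : Set R2 :=
  {x | ∃ u v : Fin n × S1, u ≠ v ∧ pr (L.emb u) = x ∧ pr (L.emb v) = x}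

/-- A (based ordered oriented) link diagram: a link in regular position with
respect to the projection `pr`; there are finitely many crossings, each
crossing is a transverse double point, and no basepoint lies over a
crossing. -/
structure Diagram (n : ℕ) extends Link n where
  finiteCrossings : (doublePts toLink).Finite
  doubleOnly : ∀ x ∈ doublePts toLink, ∃ u v : Fin n × S1, u ≠ v ∧
    pr (toLink.emb u) = x ∧ pr (toLink.emb v) = x ∧
    ∀ w : Fin n × S1, pr (toLink.emb w) = x → w = u ∨ w = v
  baseFree : ∀ i : Fin n, pr (toLink.emb (i, 0)) ∉ doublePts toLink

/-- `u` is encountered strictly before `v` when the components of a diagram are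
traversed in order, each from its basepoint in the direction of its
orientation. -/
def encBefore {n : ℕ} (u v : Fin n × S1) : Prop :=
  u.1 < v.1 ∨ (u.1 = v.1 ∧ tOf u.2 < tOf v.2)

/-- The crossing `x` of the diagram `D` is ascending: it is first encountered
as an under-crossing.  These are exactly the crossings at which `D` differs
from its descending diagram `d(D)`. -/
def AscendingAt {n : ℕ} (D : Diagram n) (x : R2) : Prop :=
  ∃ u v : Fin n × S1, pr (D.emb u) = x ∧ pr (D.emb v) = x ∧
    encBefore u v ∧ ht (D.emb u) < ht (D.emb v)

/-- A diagram is descending if every crossing is first encountered as an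
over-crossing; equivalently, it coincides with its descending diagram. -/
def IsDescending {n : ℕ} (D : Diagram n) : Prop :=
  ∀ x ∈ doublePts D.toLink, ¬ AscendingAt D x

/-- The ascending number `a(D̃)` of a diagram: the number of crossings at which
`D` differs from its descending diagram `d(D)`. -/
def diagAsc {n : ℕ} (D : Diagram n) : ℕ := {x : R2 | AscendingAt D x}.ncard

/-- The ascending number `a(L)` of a link: the minimum of `a(D̃)` over all
based ordered oriented diagrams of `L`. -/
def ascNum {n : ℕ} (L : Link n) : ℕ :=
  sInf {m : ℕ | ∃ D : Diagram n, LinkEquiv D.toLink L ∧ diagAsc D = m}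

/-- The minimal crossing number `c(L)` of a link. -/
def crossingNum {n : ℕ} (L : Link n) : ℕ :=
  sInf {m : ℕ | ∃ D : Diagram n, LinkEquiv D.toLink L ∧ (doublePts D.toLink).ncard = m}

/-- The closed unit disk in the plane. -/
def Disk2 : Set R2 := Metric.closedBall 0 1

/-- The unit circle, boundary of `Disk2`. -/
def Circ2 : Set R2 := Metric.sphere 0 1

/-- The components of `L` indexed by `S` form a trivial link: they bound
disjoint embedded disks. -/
def SubTrivial {n : ℕ} (L : Link n) (S : Set (Fin n)) : Prop :=
  ∃ F : Fin n × R2 → R3,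
    ContinuousOn F (S ×ˢ Disk2) ∧ Set.InjOn F (S ×ˢ Disk2) ∧
    ∀ i ∈ S, (Set.range fun t : S1 => L.emb (i, t)) = F '' ({i} ×ˢ Circ2)

/-- A trivial link: all components bound disjoint embedded disks. -/
def IsTrivialLink {n : ℕ} (L : Link n) : Prop := SubTrivial L Set.univ

/-- The set of crossings at which the two diagrams `D`, `D'` (assumed to have
the same underlying projection) differ, i.e. where a crossing change has been
performed. -/
def diffCrossings {n : ℕ} (D D' : Diagram n) : Set R2 :=
  {x : R2 | ∃ u v : Fin n × S1, u ≠ v ∧ pr (D.emb u) = x ∧ pr (D.emb v) = x ∧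
    ht (D.emb u) < ht (D.emb v) ∧ ht (D'.emb v) < ht (D'.emb u)}

/-- The unknotting (unlinking) number `u(L)`: the minimal number of crossing
changes, over all diagrams of `L`, needed to turn `L` into a trivial link. -/
def unknottingNum {n : ℕ} (L : Link n) : ℕ :=
  sInf {m : ℕ | ∃ D D' : Diagram n, LinkEquiv D.toLink L ∧
    pr ∘ D'.emb = pr ∘ D.emb ∧ IsTrivialLink D'.toLink ∧
    (diffCrossings D D').ncard = m}

/-- The set of points of (the domain of) `L` at which the height function has
a local maximum. -/
def maxSet {n : ℕ} (L : Link n) : Set (Fin n × S1) :=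
  {u | IsLocalMax (fun w => ht (L.emb w)) u}

/-- The number of local maxima (counted as connected families) of the height
function on a given embedding. -/
def bridgeCount {n : ℕ} (L : Link n) : ℕ :=
  Nat.card (ConnectedComponents ↥(maxSet L))

/-- The bridge number `b(L)`: the minimal number of local maxima of the height
function over all embeddings of `L`. -/
def bridgeNum {n : ℕ} (L : Link n) : ℕ :=
  sInf {m : ℕ | ∃ G : Link n, LinkEquiv G L ∧
    Finite (ConnectedComponents ↥(maxSet G)) ∧ bridgeCount G = m}

/-- The `i`-th component of a link, as a knot. -/
def component {n : ℕ} (L : Link n) (i : Fin n) : Link 1 where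
  emb := fun p => L.emb (i, p.2)
  continuous := L.continuous.comp (continuous_const.prodMk continuous_snd)
  injective := by
    rintro ⟨a1, a2⟩ ⟨b1, b2⟩ hab
    have h := L.injective hab
    rw [Prod.mk.injEq] at h
    rw [Prod.mk.injEq]
    exact ⟨Subsingleton.elim _ _, h.2⟩
  polygonal := fun _ => L.polygonal i

/-- The 2-component sublink of `L` on the (distinct) components `i` and `j`. -/
def pairSub {n : ℕ} (L : Link n) (i j : Fin n) (hij : i ≠ j) : Link 2 where
  emb := fun p => L.emb (![i, j] p.1, p.2)
  continuous := L.continuous.comp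
    (((continuous_of_discreteTopology (f := fun k : Fin 2 => ![i, j] k)).comp
      continuous_fst).prodMk continuous_snd)
  injective := by
    rintro ⟨a1, a2⟩ ⟨b1, b2⟩ hab
    have h := L.injective hab
    rw [Prod.mk.injEq] at h
    rw [Prod.mk.injEq]
    refine ⟨?_, h.2⟩
    have h1 := h.1
    fin_cases a1 <;> fin_cases b1 <;> simp_all
  polygonal := by
    intro k
    fin_cases k
    · simpa using L.polygonal i
    · simpa using L.polygonal j

/-- An arc with endpoints `a` and `b`. -/
def IsArc (γ : Set R3) (a b : R3) : Prop :=
  ∃ f : ℝ → R3, ContinuousOn f (Icc (0:ℝ) 1) ∧ Set.InjOn f (Icc (0:ℝ) 1) ∧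
    f '' Icc (0:ℝ) 1 = γ ∧ f 0 = a ∧ f 1 = b

/-- `K` is a connected sum of the knots `K₁` and `K₂`: after an ambient
isotopy there is a round 2-sphere meeting `K` in exactly two points, and
capping off the two resulting arcs of `K` with an arc on the sphere produces
knots equivalent to `K₁` (inside) and `K₂` (outside). -/
def IsConnectedSum (K K₁ K₂ : Link 1) : Prop :=
  ∃ K' : Link 1, LinkEquiv K' K ∧
  ∃ (c : R3) (r : ℝ), 0 < r ∧ ∃ a b : R3, a ≠ b ∧
    Set.range K'.emb ∩ sphere c r = {a, b} ∧
    ∃ γ : Set R3, IsArc γ a b ∧ γ ⊆ sphere c r ∧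
      Carries K₁ ((Set.range K'.emb ∩ closedBall c r) ∪ γ) ∧
      Carries K₂ ((Set.range K'.emb \ ball c r) ∪ γ)

/-- `IsIterConnSum E m K` : `K` is a connected sum of `m` copies of the knot
`E` (the empty sum being the unknot). -/
inductive IsIterConnSum (E : Link 1) : ℕ → Link 1 → Prop
  | zero (K : Link 1) : IsTrivialLink K → IsIterConnSum E 0 K
  | succ (m : ℕ) (K' K : Link 1) : IsIterConnSum E m K' → IsConnectedSum K K' E →
      IsIterConnSum E (m + 1) K

/-- First strand of the twist region: one of the two strands of a double helix
with `m` half-twists. -/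
def helixA (m : ℤ) : Set R3 :=
  (fun t : ℝ => v3 (cos (π * m * t)) (sin (π * m * t)) (1 + t)) '' Icc 0 1

/-- Second strand of the twist region. -/
def helixB (m : ℤ) : Set R3 :=
  (fun t : ℝ => v3 (-cos (π * m * t)) (-sin (π * m * t)) (1 + t)) '' Icc 0 1

/-- The fold of the hairpin: a semicircle joining the bottoms of the two
helical strands. -/
def bottomArc : Set R3 := (fun θ : ℝ => v3 (cos θ) (sin θ) 1) '' Icc π (2 * π)

/-- The clasp: a polygonal arc joining the two top endpoints of the double
helix which passes once through the eye of the hairpin, clasping the fold. -/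
def capArc (m : ℤ) : Set R3 :=
  segment ℝ (v3 1 0 2) (v3 3 0 2) ∪
  segment ℝ (v3 3 0 2) (v3 3 0 (1/2)) ∪
  segment ℝ (v3 3 0 (1/2)) (v3 0 (-(1/2)) (1/2)) ∪
  segment ℝ (v3 0 (-(1/2)) (1/2)) (v3 0 (-(1/2)) (1 + 1/|(m : ℝ)|)) ∪
  segment ℝ (v3 0 (-(1/2)) (1 + 1/|(m : ℝ)|)) (v3 0 (-3) (1 + 1/|(m : ℝ)|)) ∪
  segment ℝ (v3 0 (-3) (1 + 1/|(m : ℝ)|)) (v3 0 (-3) 3) ∪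
  segment ℝ (v3 0 (-3) 3) (v3 (-1) 0 3) ∪
  segment ℝ (v3 (-1) 0 3) (v3 (-1) 0 2)

/-- The standard twist knot with `m` half-twists and a clasp: a hairpin with
`m` half-twists whose end is passed through its eye (`m = 1` gives the
trefoil, `m = 2` the figure-eight knot, then `5₂`, `6₁`, ...; negative `m`
gives the mirror images). -/
def twistSet (m : ℤ) : Set R3 := helixA m ∪ helixB m ∪ bottomArc ∪ capArc m

/-- `K` is a twist knot: a nontrivial knot obtained from a sequence of
half-twists by adding a clasp. -/
def IsTwistKnot (K : Link 1) : Prop :=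
  ¬ IsTrivialLink K ∧ ∃ m : ℤ, Carries K (twistSet m)

/-- The standard Hopf link: two round circles linked once. -/
def hopfSet : Set R3 :=
  (Set.range fun θ : ℝ => v3 (cos θ) (sin θ) 0) ∪
  (Set.range fun θ : ℝ => v3 (1 + cos θ) 0 (sin θ))

/-- `L` is a Hopf link. -/
def IsHopfLink (L : Link 2) : Prop := Carries L hopfSet

/-- The standard `(p,q)` curve on the torus of revolution: it winds `p` times
around the meridian and `q` times around the longitude. -/
def torusCurve (p q : ℕ) : Set R3 :=
  Set.range fun t : ℝ =>
    v3 (((2 : ℝ) + cos (2 * π * p * t)) * cos (2 * π * q * t))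
       (((2 : ℝ) + cos (2 * π * p * t)) * sin (2 * π * q * t))
       (sin (2 * π * p * t))

/-- `K` is the `(p,q)`-torus knot. -/
def IsTorusKnot (p q : ℕ) (K : Link 1) : Prop := Carries K (torusCurve p q)

/-- The components of `L` indexed by `S` are split from the remaining ones by
a round 2-sphere. -/
def SplitAt {n : ℕ} (L : Link n) (S : Set (Fin n)) : Prop :=
  ∃ (c : R3) (r : ℝ), 0 < r ∧
    (∀ i ∈ S, ∀ t : S1, L.emb (i, t) ∈ ball c r) ∧
    (∀ i ∉ S, ∀ t : S1, L.emb (i, t) ∉ closedBall c r)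

/-- `L` is completely splittable: its components can be separated by disjoint
embedded 2-spheres (equivalently, after an ambient isotopy they lie in
pairwise disjoint round balls). -/
def CompletelySplittable {n : ℕ} (L : Link n) : Prop :=
  ∃ L' : Link n, LinkEquiv L' L ∧ ∃ (c : Fin n → R3) (r : Fin n → ℝ),
    (∀ i, 0 < r i) ∧
    (Set.univ : Set (Fin n)).Pairwise
      (fun i j => Disjoint (closedBall (c i) (r i)) (closedBall (c j) (r j))) ∧
    ∀ (i : Fin n) (t : S1), L'.emb (i, t) ∈ ball (c i) (r i)


section AscHalfAux

lemma coe_tOf (t : S1) : ((tOf t : ℝ) : S1) = t :=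
  (AddCircle.equivIco 1 0).symm_apply_apply t

lemma tOf_mem (t : S1) : tOf t ∈ Set.Ico (0:ℝ) 1 := by
  have := (AddCircle.equivIco 1 0 t).2
  simpa [tOf] using this

lemma tOf_injective : Function.Injective tOf := fun s t h => by
  rw [← coe_tOf s, ← coe_tOf t, h]

lemma tOf_coe {r : ℝ} (hr : r ∈ Set.Ico (0:ℝ) 1) : tOf (r : S1) = r := by
  have h : tOf (r : S1) = toIcoMod (Fact.out : (0:ℝ) < 1) 0 r := rfl
  rw [h, toIcoMod_eq_self]
  simpa using hr

lemma tOf_neg {t : S1} (h : t ≠ 0) : tOf (-t) = 1 - tOf t := by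
  have hm := tOf_mem t
  have h0 : tOf t ≠ 0 := fun h' => h (by rw [← coe_tOf t, h']; norm_cast)
  have key : ((1 - tOf t : ℝ) : S1) = -t := by
    have hsub : ((1 - tOf t : ℝ) : S1) = ((1:ℝ) : S1) - ((tOf t : ℝ) : S1) :=
      QuotientAddGroup.mk_sub _ _ _
    have h1 : ((1:ℝ) : S1) = 0 := by
      simpa using AddCircle.coe_period (p := (1:ℝ))
    rw [hsub, h1, coe_tOf, zero_sub]
  rw [← key, tOf_coe]
  refine ⟨by linarith [hm.2], ?_⟩
  have : 0 < tOf t := lt_of_le_of_ne hm.1 (Ne.symm h0)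
  linarith

namespace AscHalf

variable {n : ℕ}

/-- The reversing involution on the parameter space: reverse the order of the
components and the orientation of each component. -/
def σ (u : Fin n × S1) : Fin n × S1 := (u.1.rev, -u.2)

lemma σσ (u : Fin n × S1) : σ (σ u) = u := by
  simp [σ, Fin.rev_rev]

lemma σ_inj : Function.Injective (σ (n := n)) :=
  Function.LeftInverse.injective σσ

/-- Reversal of a link. -/
def revLink (L : Link n) : Link n where
  emb := fun u => L.emb (σ u)
  continuous := L.continuous.comp
    (((continuous_of_discreteTopology (f := fun i : Fin n => i.rev)).comp
      continuous_fst).prodMk (continuous_neg.comp continuous_snd))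
  injective := L.injective.comp σ_inj
  polygonal := by
    intro i
    obtain ⟨F, hF⟩ := L.polygonal i.rev
    refine ⟨F, ?_⟩
    rw [← hF]
    ext x
    constructor
    · rintro ⟨t, rfl⟩; exact ⟨-t, rfl⟩
    · rintro ⟨t, rfl⟩; exact ⟨-t, by simp [σ]⟩

lemma doublePts_rev (L : Link n) : doublePts (revLink L) = doublePts L := by
  ext x
  constructor
  · rintro ⟨u, v, huv, hu, hv⟩
    exact ⟨σ u, σ v, fun h => huv (σ_inj h), hu, hv⟩
  · rintro ⟨u, v, huv, hu, hv⟩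
    refine ⟨σ u, σ v, fun h => huv (σ_inj h), ?_, ?_⟩
    · show pr (L.emb (σ (σ u))) = x; rw [σσ]; exact hu
    · show pr (L.emb (σ (σ v))) = x; rw [σσ]; exact hv

/-- Reversal of a diagram. -/
def revDiagram (D : Diagram n) : Diagram n where
  toLink := revLink D.toLink
  finiteCrossings := by rw [doublePts_rev]; exact D.finiteCrossings
  doubleOnly := by
    intro x hx
    rw [doublePts_rev] at hx
    obtain ⟨u, v, huv, hu, hv, hw⟩ := D.doubleOnly x hx
    refine ⟨σ u, σ v, fun h => huv (σ_inj h), ?_, ?_, ?_⟩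
    · show pr (D.toLink.emb (σ (σ u))) = x; rw [σσ]; exact hu
    · show pr (D.toLink.emb (σ (σ v))) = x; rw [σσ]; exact hv
    · intro w hww
      rcases hw (σ w) hww with h | h
      · left; rw [← h, σσ]
      · right; rw [← h, σσ]
  baseFree := by
    intro i
    rw [doublePts_rev]
    have h : (revLink D.toLink).emb (i, 0) = D.toLink.emb (i.rev, 0) := by
      show D.toLink.emb (σ (i, 0)) = _
      simp [σ]
    rw [h]
    exact D.baseFree i.rev

lemma encBefore_total {u v : Fin n × S1} (h : u ≠ v) :
    encBefore u v ∨ encBefore v u := by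
  rcases lt_trichotomy u.1 v.1 with h1 | h1 | h1
  · exact Or.inl (Or.inl h1)
  · rcases lt_trichotomy (tOf u.2) (tOf v.2) with h2 | h2 | h2
    · exact Or.inl (Or.inr ⟨h1, h2⟩)
    · exact absurd (Prod.ext h1 (tOf_injective h2)) h
    · exact Or.inr (Or.inr ⟨h1.symm, h2⟩)
  · exact Or.inr (Or.inl h1)

lemma encBefore_asymm {u v : Fin n × S1} (h : encBefore u v) :
    ¬ encBefore v u := by
  rintro (h' | ⟨h1', h2'⟩) <;> rcases h with h | ⟨h1, h2⟩
  · exact lt_asymm h h'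
  · exact absurd h1 (ne_of_gt h')
  · exact absurd h1' (ne_of_gt h)
  · exact lt_asymm h2 h2'

lemma encBefore_rev {u v : Fin n × S1} (hu : u.2 ≠ 0) (hv : v.2 ≠ 0) :
    encBefore (σ u) (σ v) ↔ encBefore v u := by
  show (u.1.rev < v.1.rev ∨ (u.1.rev = v.1.rev ∧ tOf (-u.2) < tOf (-v.2))) ↔ _
  rw [Fin.rev_lt_rev, Fin.rev_inj, tOf_neg hu, tOf_neg hv]
  unfold encBefore
  constructor
  · rintro (h | ⟨h1, h2⟩)
    · exact Or.inl h
    · exact Or.inr ⟨h1.symm, by linarith⟩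
  · rintro (h | ⟨h1, h2⟩)
    · exact Or.inl h
    · exact Or.inr ⟨h1.symm, by linarith⟩

lemma eq_of_pr_ht {x y : R3} (h1 : pr x = pr y) (h2 : ht x = ht y) : x = y := by
  have e0 : x 0 = y 0 := by simpa [pr, v2] using congrArg (fun z : R2 => z 0) h1
  have e1 : x 1 = y 1 := by simpa [pr, v2] using congrArg (fun z : R2 => z 1) h1
  ext i
  fin_cases i
  · exact e0
  · exact e1
  · exact h2

lemma asc_mem {D : Diagram n} {x : R2} (h : AscendingAt D x) :
    x ∈ doublePts D.toLink := by
  obtain ⟨u, v, hu, hv, _, hh⟩ := h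
  refine ⟨u, v, ?_, hu, hv⟩
  rintro rfl
  exact lt_irrefl _ hh

lemma asc_rev_iff (D : Diagram n) {x : R2} (hx : x ∈ doublePts D.toLink) :
    AscendingAt (revDiagram D) x ↔ ¬ AscendingAt D x := by
  obtain ⟨u, v, huv, hu, hv, hw⟩ := D.doubleOnly x hx
  have hnz : ∀ w : Fin n × S1, pr (D.toLink.emb w) = x → w.2 ≠ 0 := by
    intro w hwx h0
    apply D.baseFree w.1
    have hw0 : (w.1, (0:S1)) = w := Prod.ext rfl h0.symm
    rw [hw0, hwx]
    exact hx
  have hne : ht (D.toLink.emb u) ≠ ht (D.toLink.emb v) := by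
    intro h
    exact huv (D.toLink.injective (eq_of_pr_ht (hu.trans hv.symm) h))
  have charD : AscendingAt D x ↔
      (encBefore u v ∧ ht (D.toLink.emb u) < ht (D.toLink.emb v)) ∨
      (encBefore v u ∧ ht (D.toLink.emb v) < ht (D.toLink.emb u)) := by
    constructor
    · rintro ⟨a, b, ha, hb, henc, hht⟩
      rcases hw a ha with rfl | rfl <;> rcases hw b hb with rfl | rfl
      · exact absurd hht (lt_irrefl _)
      · exact Or.inl ⟨henc, hht⟩
      · exact Or.inr ⟨henc, hht⟩
      · exact absurd hht (lt_irrefl _)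
    · rintro (⟨h1, h2⟩ | ⟨h1, h2⟩)
      · exact ⟨u, v, hu, hv, h1, h2⟩
      · exact ⟨v, u, hv, hu, h1, h2⟩
  have charR : AscendingAt (revDiagram D) x ↔
      (encBefore v u ∧ ht (D.toLink.emb u) < ht (D.toLink.emb v)) ∨
      (encBefore u v ∧ ht (D.toLink.emb v) < ht (D.toLink.emb u)) := by
    constructor
    · rintro ⟨a, b, ha, hb, henc, hht⟩
      have hp : pr (D.toLink.emb (σ a)) = x := ha
      have hq : pr (D.toLink.emb (σ b)) = x := hb
      have henc2 : encBefore (σ (σ a)) (σ (σ b)) := by rw [σσ, σσ]; exact henc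
      have henc3 : encBefore (σ b) (σ a) :=
        (encBefore_rev (hnz _ hp) (hnz _ hq)).mp henc2
      have hht' : ht (D.toLink.emb (σ a)) < ht (D.toLink.emb (σ b)) := hht
      rcases hw (σ a) hp with h1 | h1 <;> rcases hw (σ b) hq with h2 | h2 <;>
        rw [h1, h2] at henc3 hht'
      · exact absurd hht' (lt_irrefl _)
      · exact Or.inl ⟨henc3, hht'⟩
      · exact Or.inr ⟨henc3, hht'⟩
      · exact absurd hht' (lt_irrefl _)
    · rintro (⟨h1, h2⟩ | ⟨h1, h2⟩)
      · refine ⟨σ u, σ v, ?_, ?_, ?_, ?_⟩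
        · show pr (D.toLink.emb (σ (σ u))) = x; rw [σσ]; exact hu
        · show pr (D.toLink.emb (σ (σ v))) = x; rw [σσ]; exact hv
        · exact (encBefore_rev (hnz u hu) (hnz v hv)).mpr h1
        · show ht (D.toLink.emb (σ (σ u))) < ht (D.toLink.emb (σ (σ v)))
          rw [σσ, σσ]; exact h2
      · refine ⟨σ v, σ u, ?_, ?_, ?_, ?_⟩
        · show pr (D.toLink.emb (σ (σ v))) = x; rw [σσ]; exact hv
        · show pr (D.toLink.emb (σ (σ u))) = x; rw [σσ]; exact hu
        · exact (encBefore_rev (hnz v hv) (hnz u hu)).mpr h1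
        · show ht (D.toLink.emb (σ (σ v))) < ht (D.toLink.emb (σ (σ u)))
          rw [σσ, σσ]; exact h2
  rw [charR, charD]
  constructor
  · rintro (⟨h1, h2⟩ | ⟨h1, h2⟩) (⟨h1', h2'⟩ | ⟨h1', h2'⟩)
    · exact encBefore_asymm h1 h1'
    · exact lt_asymm h2 h2'
    · exact lt_asymm h2 h2'
    · exact encBefore_asymm h1 h1'
  · intro hnd
    rcases hne.lt_or_gt with hlt | hlt <;> rcases encBefore_total huv with he | he
    · exact absurd (Or.inl ⟨he, hlt⟩) hnd
    · exact Or.inl ⟨he, hlt⟩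
    · exact Or.inr ⟨he, hlt⟩
    · exact absurd (Or.inr ⟨he, hlt⟩) hnd

lemma asc_set_rev (D : Diagram n) :
    {x : R2 | AscendingAt (revDiagram D) x} =
      doublePts D.toLink \ {x : R2 | AscendingAt D x} := by
  ext x
  constructor
  · intro h
    have hx : x ∈ doublePts D.toLink := by
      have h' := asc_mem h
      rwa [show (revDiagram D).toLink = revLink D.toLink from rfl,
        doublePts_rev] at h'
    exact ⟨hx, (asc_rev_iff D hx).mp h⟩
  · rintro ⟨hx, h⟩
    exact (asc_rev_iff D hx).mpr h

lemma diag_count (D : Diagram n) :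
    diagAsc D + diagAsc (revDiagram D) = (doublePts D.toLink).ncard := by
  rw [diagAsc, diagAsc, asc_set_rev, add_comm]
  exact Set.ncard_diff_add_ncard_of_subset (fun x h => asc_mem h) D.finiteCrossings

lemma rev_equiv {L : Link n} (D : Diagram n) (h : LinkEquiv D.toLink L) :
    LinkEquiv (revDiagram D).toLink L := by
  obtain ⟨H, h1, h2, h3⟩ := h
  refine ⟨H, h1, h2, ?_⟩
  have hr : Set.range (revDiagram D).toLink.emb = Set.range D.toLink.emb := by
    ext y
    constructor
    · rintro ⟨w, rfl⟩; exact ⟨σ w, rfl⟩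
    · rintro ⟨w, rfl⟩
      exact ⟨σ w, by show D.toLink.emb (σ (σ w)) = _; rw [σσ]⟩
  rw [hr]
  exact h3

end AscHalf

end AscHalfAux

/-- For any link `L`, the ascending number satisfies
`a(L) ≤ ⌊c(L)/2⌋`, where `c(L)` is the minimal crossing number. -/
theorem ascending_le_half_crossing (n : ℕ) (L : Link n) :
    ascNum L ≤ crossingNum L / 2 := by
  classical
  by_cases hE : ∃ D : Diagram n, LinkEquiv D.toLink L
  · have hne : {m : ℕ | ∃ D : Diagram n, LinkEquiv D.toLink L ∧
        (doublePts D.toLink).ncard = m}.Nonempty := by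
      obtain ⟨D, hD⟩ := hE
      exact ⟨_, D, hD, rfl⟩
    obtain ⟨D, hD, hcard⟩ := Nat.sInf_mem hne
    have hc : (doublePts D.toLink).ncard = crossingNum L := hcard
    have hsum := AscHalf.diag_count D
    have ha1 : ascNum L ≤ diagAsc D := Nat.sInf_le ⟨D, hD, rfl⟩
    have ha2 : ascNum L ≤ diagAsc (AscHalf.revDiagram D) :=
      Nat.sInf_le ⟨AscHalf.revDiagram D, AscHalf.rev_equiv D hD, rfl⟩
    rw [hc] at hsum
    omega
  · have h1 : {m : ℕ | ∃ D : Diagram n, LinkEquiv D.toLink L ∧ diagAsc D = m} = ∅ := by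
      ext m
      simp only [Set.mem_setOf_eq, Set.mem_empty_iff_false, iff_false]
      rintro ⟨D, hD, -⟩
      exact hE ⟨D, hD⟩
    rw [ascNum, h1, Nat.sInf_empty]
    exact Nat.zero_le _


end
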